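/- arXiv:2204.08969 — 2 statements merged into one kernel-verified Lean document; each statement's English description precedes it below -/
import Mathlib

section
/- Let Ω be a simply connected topological space and 𝒰 a covering of Ω by path-connected open sets. For each U ∈ 𝒰 let f_U : U → ℝ be a function, and suppose for all U, V ∈ 𝒰 with U ∩ V ≠ ∅, the function f_V − f_U is constant on U ∩ V. Then there exists a function f : Ω → ℝ such that f_U − f is constant on U for every U ∈ 𝒰. -/
open Filter Topology Set unitInterval

namespace Stmt1Aux

set_option linter.unusedSectionVars false

variable {Ω : Type*} [TopologicalSpace Ω]

/-- `ℓ` is a lift of `γ`: locally it is of the form `f U ∘ γ + const`. -/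
def IsLift (𝒰 : Set (Set Ω)) (f : Set Ω → Ω → ℝ) (γ : I → Ω) (ℓ : I → ℝ) : Prop :=
  ∀ t : I, ∃ U ∈ 𝒰, ∀ᶠ s in 𝓝 t, γ s ∈ U ∧ ℓ s = f U (γ s) + (ℓ t - f U (γ t))

variable {𝒰 : Set (Set Ω)} {f : Set Ω → Ω → ℝ}

section Unique

variable (hconst : ∀ U ∈ 𝒰, ∀ V ∈ 𝒰, (U ∩ V).Nonempty →
      ∃ c : ℝ, ∀ x ∈ U ∩ V, f V x - f U x = c)

include hconst

lemma diff_eq {U V : Set Ω} (hU : U ∈ 𝒰) (hV : V ∈ 𝒰) {x y : Ω}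
    (hx : x ∈ U ∩ V) (hy : y ∈ U ∩ V) : f V x - f U x = f V y - f U y := by
  obtain ⟨c, hc⟩ := hconst U hU V hV ⟨x, hx⟩
  rw [hc x hx, hc y hy]

lemma isLift_locallyConstant {γ : I → Ω} {ℓ ℓ' : I → ℝ}
    (h : IsLift 𝒰 f γ ℓ) (h' : IsLift 𝒰 f γ ℓ') (t : I) :
    ∀ᶠ s in 𝓝 t, ℓ s - ℓ' s = ℓ t - ℓ' t := by
  obtain ⟨U, hU, hev⟩ := h t
  obtain ⟨V, hV, hev'⟩ := h' t
  have ht := hev.self_of_nhds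
  have ht' := hev'.self_of_nhds
  filter_upwards [hev, hev'] with s hs hs'
  have key : f V (γ s) - f U (γ s) = f V (γ t) - f U (γ t) :=
    diff_eq hconst hU hV ⟨hs.1, hs'.1⟩ ⟨ht.1, ht'.1⟩
  rw [hs.2, hs'.2]; linarith

lemma isLift_unique {γ : I → Ω} {ℓ ℓ' : I → ℝ}
    (h : IsLift 𝒰 f γ ℓ) (h' : IsLift 𝒰 f γ ℓ') (h0 : ℓ 0 = ℓ' 0) : ℓ 1 = ℓ' 1 := by
  set A : Set I := {t | ℓ t - ℓ' t = ℓ 0 - ℓ' 0} with hA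
  have hopenA : IsOpen A := by
    rw [isOpen_iff_mem_nhds]
    intro t ht
    filter_upwards [isLift_locallyConstant hconst h h' t] with s hs
    simpa [hA] using hs.trans ht
  have hclosedA : IsClosed A := by
    rw [← isOpen_compl_iff, isOpen_iff_mem_nhds]
    intro t ht
    filter_upwards [isLift_locallyConstant hconst h h' t] with s hs
    intro hmem
    exact ht (by simpa [hA] using hs.symm.trans hmem)
  have : A = univ := (isClopen_iff.mp ⟨hclosedA, hopenA⟩).resolve_left
    (Nonempty.ne_empty ⟨0, by simp [hA]⟩)
  have h1 : (1 : I) ∈ A := this ▸ mem_univ 1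
  have : ℓ 1 - ℓ' 1 = ℓ 0 - ℓ' 0 := h1
  linarith [h0, this]

end Unique

lemma chain_lift (hopen : ∀ U ∈ 𝒰, IsOpen U)
    {n : ℕ} (hn : 0 < n) {W : ℕ → Set Ω} (hW : ∀ j < n, W j ∈ 𝒰)
    {γ : I → Ω} (hγ : Continuous γ)
    (hsub : ∀ j < n, ∀ t : I, (j : ℝ)/n ≤ (t : ℝ) → (t : ℝ) ≤ ((j : ℝ)+1)/n → γ t ∈ W j)
    (r : ℕ → ℝ)
    (hr : ∀ j, j + 1 < n → ∀ x ∈ W j ∩ W (j+1), f (W j) x + r j = f (W (j+1)) x + r (j+1)) :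
    ∃ ℓ : I → ℝ, IsLift 𝒰 f γ ℓ ∧ ℓ 0 = f (W 0) (γ 0) + r 0 ∧
      ℓ 1 = f (W (n-1)) (γ 1) + r (n-1) := by
  have hn' : (0 : ℝ) < n := by exact_mod_cast hn
  set idx : I → ℕ := fun t => min ⌊(n : ℝ) * (t : ℝ)⌋₊ (n - 1) with hidx
  set ℓ : I → ℝ := fun t => f (W (idx t)) (γ t) + r (idx t) with hℓ
  have hmem : ∀ t : I, idx t < n ∧ ((idx t : ℝ))/n ≤ (t : ℝ) ∧
      (t : ℝ) ≤ ((idx t : ℝ) + 1)/n := by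
    intro t
    have h0t : (0 : ℝ) ≤ (n : ℝ) * t := mul_nonneg hn'.le t.2.1
    refine ⟨lt_of_le_of_lt (min_le_right _ _) (Nat.sub_lt hn one_pos), ?_, ?_⟩
    · rw [div_le_iff₀ hn']
      have h1 : ((idx t : ℕ) : ℝ) ≤ ((⌊(n : ℝ) * t⌋₊ : ℕ) : ℝ) := by
        exact_mod_cast min_le_left _ _
      have h2 : ((⌊(n : ℝ) * t⌋₊ : ℕ) : ℝ) ≤ (n : ℝ) * t := Nat.floor_le h0t
      nlinarith [h1, h2]
    · rw [le_div_iff₀ hn']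
      rcases le_or_gt (⌊(n : ℝ) * t⌋₊) (n - 1) with h | h
      · have : idx t = ⌊(n : ℝ) * t⌋₊ := min_eq_left h
        rw [this]
        have := Nat.lt_floor_add_one ((n : ℝ) * t)
        push_cast at this ⊢
        nlinarith [this]
      · have : idx t = n - 1 := min_eq_right h.le
        rw [this]
        have ht1 : (t : ℝ) ≤ 1 := t.2.2
        have : ((n - 1 : ℕ) : ℝ) = (n : ℝ) - 1 := by
          have : (1 : ℕ) ≤ n := hn
          push_cast [Nat.cast_sub this]; ring
        rw [this]
        nlinarith [ht1]
  refine ⟨ℓ, ?_, ?_, ?_⟩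
  · -- IsLift
    intro t
    obtain ⟨hk, hk1, hk2⟩ := hmem t
    set k := idx t with hkdef
    refine ⟨W k, hW k hk, ?_⟩
    have hγt : γ t ∈ W k := hsub k hk t hk1 hk2
    have hev1 : ∀ᶠ s in 𝓝 t, γ s ∈ W k :=
      hγ.continuousAt.preimage_mem_nhds ((hopen _ (hW k hk)).mem_nhds hγt)
    have hev2 : ∀ᶠ s : I in 𝓝 t, |(s : ℝ) - (t : ℝ)| < 1/n := by
      have hop : IsOpen {s : I | |(s : ℝ) - (t : ℝ)| < 1/n} := by
        have : Continuous fun s : I => |(s : ℝ) - (t : ℝ)| :=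
          (continuous_subtype_val.sub continuous_const).abs
        exact isOpen_Iio.preimage this
      exact hop.mem_nhds (by simp [one_div, inv_pos, hn'])
    filter_upwards [hev1, hev2] with s hsW hsd
    refine ⟨hsW, ?_⟩
    have hℓt : ℓ t = f (W k) (γ t) + r k := rfl
    rw [hℓt]
    ring_nf
    obtain ⟨hm, hm1, hm2⟩ := hmem s
    set m := idx s with hmdef
    have hℓs : ℓ s = f (W m) (γ s) + r m := rfl
    have hγsm : γ s ∈ W m := hsub m hm s hm1 hm2
    have hmk : m ≤ k + 1 := by
      by_contra hcon
      push_neg at hcon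
      have hc : ((k : ℝ) + 1 + 1) ≤ (m : ℝ) := by exact_mod_cast hcon
      rw [div_le_iff₀ hn'] at hm1 hk1
      rw [le_div_iff₀ hn'] at hm2 hk2
      obtain ⟨hl, hu⟩ := abs_lt.mp hsd
      have h1 : ((s : ℝ) - (t : ℝ)) * n < 1 := by
        rw [← lt_div_iff₀ hn'] at *; linarith
      nlinarith
    have hkm : k ≤ m + 1 := by
      by_contra hcon
      push_neg at hcon
      have hc : ((m : ℝ) + 1 + 1) ≤ (k : ℝ) := by exact_mod_cast hcon
      rw [div_le_iff₀ hn'] at hm1 hk1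
      rw [le_div_iff₀ hn'] at hm2 hk2
      obtain ⟨hl, hu⟩ := abs_lt.mp hsd
      have h2 : (-1 : ℝ) < ((s : ℝ) - (t : ℝ)) * n := by
        rw [← div_lt_iff₀ hn', neg_div]; linarith
      nlinarith
    have key : f (W m) (γ s) + r m = f (W k) (γ s) + r k := by
      rcases Nat.lt_trichotomy m k with h | h | h
      · have hm' : m + 1 = k := by omega
        have := hr m (by omega) (γ s) ⟨hγsm, hm' ▸ hsW⟩
        rw [hm'] at this; linarith
      · rw [h]
      · have hk' : k + 1 = m := by omega
        have := hr k (by omega) (γ s) ⟨hsW, hk' ▸ hγsm⟩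
        rw [hk'] at this; linarith
    rw [hℓs] at *
    linarith [key]
  · have h0 : idx 0 = 0 := by
      simp [hidx, Icc.coe_zero]
    simp only [hℓ, h0]
  · have h1 : idx 1 = n - 1 := by
      simp [hidx, Icc.coe_one, Nat.floor_natCast]
    simp only [hℓ, h1]

/-- The recursively defined fiber offsets along a chain. -/
noncomputable def chainR (f : Set Ω → Ω → ℝ) (W : ℕ → Set Ω) (g : ℕ → Ω) (a : ℝ) : ℕ → ℝ
  | 0 => a - f (W 0) (g 0)
  | (j+1) => chainR f W g a j + f (W j) (g (j+1)) - f (W (j+1)) (g (j+1))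

section Chain

variable (hconst : ∀ U ∈ 𝒰, ∀ V ∈ 𝒰, (U ∩ V).Nonempty →
      ∃ c : ℝ, ∀ x ∈ U ∩ V, f V x - f U x = c)

include hconst

lemma chainR_hr {n : ℕ} {W : ℕ → Set Ω} {g : ℕ → Ω} {a : ℝ}
    (hW : ∀ j < n, W j ∈ 𝒰) (hg : ∀ j, j + 1 < n → g (j+1) ∈ W j ∩ W (j+1)) :
    ∀ j, j + 1 < n → ∀ x ∈ W j ∩ W (j+1),
      f (W j) x + chainR f W g a j = f (W (j+1)) x + chainR f W g a (j+1) := by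
  intro j hj x hx
  have hd := diff_eq hconst (hW j (by omega)) (hW (j+1) hj) hx (hg j hj)
  simp only [chainR]; linarith

lemma chainR_congr {n : ℕ} {W : ℕ → Set Ω} {g g' : ℕ → Ω} {a : ℝ}
    (hW : ∀ j < n, W j ∈ 𝒰) (hgg : g 0 = g' 0)
    (hg : ∀ j, j + 1 < n → g (j+1) ∈ W j ∩ W (j+1))
    (hg' : ∀ j, j + 1 < n → g' (j+1) ∈ W j ∩ W (j+1)) :
    ∀ j < n, chainR f W g a j = chainR f W g' a j := by
  intro j
  induction j with
  | zero => intro _; simp [chainR, hgg]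
  | succ j ih =>
    intro hj
    have hih := ih (by omega)
    have hd := diff_eq hconst (hW j (by omega)) (hW (j+1) hj) (hg j hj) (hg' j hj)
    simp only [chainR]; linarith

end Chain

/-- Tube-style Lebesgue data for a continuous map on `I × I` around a fixed parameter. -/
lemma tube (hopen : ∀ U ∈ 𝒰, IsOpen U) (hcover : ⋃₀ 𝒰 = Set.univ)
    (H : C(I × I, Ω)) (s₀ : I) :
    ∃ n : ℕ, 0 < n ∧ ∃ δ : ℝ, 0 < δ ∧ ∃ W : ℕ → Set Ω, (∀ j, W j ∈ 𝒰) ∧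
      ∀ s : I, dist s s₀ < δ → ∀ j < n, ∀ t : I,
        (j : ℝ)/n ≤ (t : ℝ) → (t : ℝ) ≤ ((j : ℝ)+1)/n → H (s, t) ∈ W j := by
  have hcov : (univ : Set (I × I)) ⊆ ⋃ U : 𝒰, H ⁻¹' (U : Set Ω) := by
    intro p _
    have : H p ∈ ⋃₀ 𝒰 := hcover ▸ mem_univ _
    obtain ⟨U, hU, hmem⟩ := this
    exact mem_iUnion.mpr ⟨⟨U, hU⟩, hmem⟩
  obtain ⟨δ, hδ, hball⟩ := lebesgue_number_lemma_of_metric isCompact_univ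
    (fun U : 𝒰 => (hopen U U.2).preimage H.continuous) hcov
  obtain ⟨n, hnδ⟩ := exists_nat_gt (1/δ)
  have hn : 0 < n := by
    by_contra h
    push_neg at h
    interval_cases n
    simp only [Nat.cast_zero] at hnδ
    have : (0:ℝ) < 1/δ := by positivity
    linarith
  have hn' : (0 : ℝ) < n := by exact_mod_cast hn
  have h1n : 1/(n : ℝ) < δ := by
    rw [div_lt_iff₀ hn']
    rw [div_lt_iff₀ hδ] at hnδ
    nlinarith
  set q : ℕ → I := fun j => projIcc 0 1 zero_le_one ((j : ℝ)/n) with hq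
  have hWex : ∀ j : ℕ, ∃ U : 𝒰, Metric.ball ((s₀, q j) : I × I) δ ⊆ H ⁻¹' (U : Set Ω) :=
    fun j => hball _ (mem_univ _)
  choose W hWb using hWex
  refine ⟨n, hn, δ, hδ, fun j => W j, fun j => (W j).2, ?_⟩
  intro s hs j hj t h1 h2
  have hqj : ((q j : ℝ)) = (j : ℝ)/n := by
    have hmem : (j : ℝ)/n ∈ Icc (0:ℝ) 1 := by
      constructor
      · positivity
      · rw [div_le_one hn']
        exact_mod_cast Nat.cast_le.mpr hj.le
    simp only [hq]
    rw [projIcc_of_mem zero_le_one hmem]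
  have hmemball : ((s, t) : I × I) ∈ Metric.ball ((s₀, q j) : I × I) δ := by
    rw [Metric.mem_ball, Prod.dist_eq]
    refine max_lt hs ?_
    rw [Subtype.dist_eq, Real.dist_eq, hqj]
    have : |(t:ℝ) - (j:ℝ)/n| ≤ 1/n := by
      have heq : ((j:ℝ)+1)/n = (j:ℝ)/n + 1/n := by ring
      rw [abs_le]
      refine ⟨by nlinarith [h1, h2], by nlinarith [h1, h2]⟩
    linarith
  exact hWb j hmemball

section Main

variable (hopen : ∀ U ∈ 𝒰, IsOpen U) (hcover : ⋃₀ 𝒰 = Set.univ)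
    (hconst : ∀ U ∈ 𝒰, ∀ V ∈ 𝒰, (U ∩ V).Nonempty →
      ∃ c : ℝ, ∀ x ∈ U ∩ V, f V x - f U x = c)

include hopen hcover hconst

/-- Existence of lifts. -/
lemma exists_lift (γ : I → Ω) (hγ : Continuous γ) (a : ℝ) :
    ∃ ℓ : I → ℝ, IsLift 𝒰 f γ ℓ ∧ ℓ 0 = a := by
  obtain ⟨n, hn, δ, hδ, W, hW, hsub'⟩ := tube hopen hcover
    ⟨fun p => γ p.2, hγ.comp continuous_snd⟩ 0
  have hsub : ∀ j < n, ∀ t : I, (j : ℝ)/n ≤ (t : ℝ) → (t : ℝ) ≤ ((j : ℝ)+1)/n → γ t ∈ W j := by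
    intro j hj t h1 h2
    exact hsub' 0 (by simpa using hδ) j hj t h1 h2
  have hn' : (0 : ℝ) < n := by exact_mod_cast hn
  set q : ℕ → I := fun j => projIcc 0 1 zero_le_one ((j : ℝ)/n) with hq
  have hqmem : ∀ j, j ≤ n → ((q j : ℝ)) = (j : ℝ)/n := by
    intro j hj
    have hmem : (j : ℝ)/n ∈ Icc (0:ℝ) 1 := by
      constructor
      · positivity
      · rw [div_le_one hn']
        exact_mod_cast Nat.cast_le.mpr hj
    simp only [hq]
    rw [projIcc_of_mem zero_le_one hmem]
  have hg : ∀ j, j + 1 < n → γ (q (j+1)) ∈ W j ∩ W (j+1) := by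
    intro j hj
    have hc : ((q (j+1) : ℝ)) = ((j:ℝ)+1)/n := by
      have := hqmem (j+1) (by omega); push_cast at this ⊢; linarith [this]
    constructor
    · refine hsub j (by omega) _ ?_ ?_ <;> rw [hc] <;>
        exact (div_le_div_iff_of_pos_right hn').mpr (by push_cast; linarith)
    · refine hsub (j+1) hj _ ?_ ?_ <;> rw [hc] <;>
        exact (div_le_div_iff_of_pos_right hn').mpr (by push_cast; linarith)
  obtain ⟨ℓ, hl, h0, _⟩ := chain_lift hopen hn (fun j _ => hW j) hγ hsub
    (chainR f W (fun j => γ (q j)) a)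
    (chainR_hr hconst (fun j _ => hW j) hg)
  refine ⟨ℓ, hl, ?_⟩
  have hq0 : q 0 = 0 := by
    apply Subtype.ext
    have := hqmem 0 (by omega)
    simpa using this
  rw [h0]
  simp [chainR, hq0]

/-- Monodromy: lifts along the two ends of a homotopy rel endpoints end at the same value. -/
lemma monodromy {a b : Ω} (H : C(I × I, Ω))
    (ha : ∀ s, H (s, 0) = a) (hb : ∀ s, H (s, 1) = b) (v : ℝ)
    {ℓ₀ ℓ₁ : I → ℝ} (h₀ : IsLift 𝒰 f (fun t => H (0, t)) ℓ₀)
    (h₁ : IsLift 𝒰 f (fun t => H (1, t)) ℓ₁)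
    (h₀0 : ℓ₀ 0 = v) (h₁0 : ℓ₁ 0 = v) : ℓ₀ 1 = ℓ₁ 1 := by
  have hcont : ∀ s : I, Continuous fun t => H (s, t) :=
    fun s => H.continuous.comp (Continuous.prodMk_right s)
  -- canonical lift endpoint
  set φ : I → ℝ := fun s =>
    (Classical.choose (exists_lift hopen hcover hconst _ (hcont s) v)) 1 with hφdef
  have hφ : ∀ s : I, ∀ ℓ : I → ℝ, IsLift 𝒰 f (fun t => H (s, t)) ℓ → ℓ 0 = v → ℓ 1 = φ s := by
    intro s ℓ hl h0
    obtain ⟨hl', h0'⟩ := Classical.choose_spec (exists_lift hopen hcover hconst _ (hcont s) v)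
    exact isLift_unique hconst hl hl' (h0.trans h0'.symm)
  -- local constancy of φ
  have hloc : ∀ s₀ : I, ∀ᶠ s in 𝓝 s₀, φ s = φ s₀ := by
    intro s₀
    obtain ⟨n, hn, δ, hδ, W, hW, hsub⟩ := tube hopen hcover H s₀
    have hn' : (0 : ℝ) < n := by exact_mod_cast hn
    set q : ℕ → I := fun j => projIcc 0 1 zero_le_one ((j : ℝ)/n) with hq
    have hqmem : ∀ j, j ≤ n → ((q j : ℝ)) = (j : ℝ)/n := by
      intro j hj
      have hmem : (j : ℝ)/n ∈ Icc (0:ℝ) 1 := by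
        constructor
        · positivity
        · rw [div_le_one hn']
          exact_mod_cast Nat.cast_le.mpr hj
      simp only [hq]
      rw [projIcc_of_mem zero_le_one hmem]
    have hq0 : q 0 = 0 := Subtype.ext (by simpa using hqmem 0 (by omega))
    have hq1 : q n = 1 := Subtype.ext (by
      rw [hqmem n le_rfl, div_self hn'.ne']; rfl)
    -- for each s close to s₀, the canonical chain computation
    have hkey : ∀ s : I, dist s s₀ < δ → φ s =
        f (W (n-1)) b + chainR f W (fun j => H (s₀, q j)) v (n-1) := by
      intro s hs
      have hsubs : ∀ j < n, ∀ t : I,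
          (j : ℝ)/n ≤ (t : ℝ) → (t : ℝ) ≤ ((j : ℝ)+1)/n → H (s, t) ∈ W j :=
        fun j hj t h1 h2 => hsub s hs j hj t h1 h2
      have hgmem : ∀ s' : I, dist s' s₀ < δ → ∀ j, j + 1 < n →
          H (s', q (j+1)) ∈ W j ∩ W (j+1) := by
        intro s' hs' j hj
        have hc : ((q (j+1) : ℝ)) = ((j:ℝ)+1)/n := by
          have := hqmem (j+1) (by omega); push_cast at this ⊢; linarith [this]
        constructor
        · refine hsub s' hs' j (by omega) _ ?_ ?_ <;> rw [hc] <;>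
            exact (div_le_div_iff_of_pos_right hn').mpr (by push_cast; linarith)
        · refine hsub s' hs' (j+1) hj _ ?_ ?_ <;> rw [hc] <;>
            exact (div_le_div_iff_of_pos_right hn').mpr (by push_cast; linarith)
      obtain ⟨ℓ, hl, h0, h1⟩ := chain_lift hopen hn (fun j _ => hW j) (hcont s) hsubs
        (chainR f W (fun j => H (s, q j)) v)
        (chainR_hr hconst (fun j _ => hW j) (hgmem s hs))
      have hℓ0 : ℓ 0 = v := by
        rw [h0]; simp [chainR, hq0, ha s]
      have := hφ s ℓ hl hℓ0
      rw [← this, h1, hb s]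
      congr 1
      -- the chain offsets at s and s₀ agree
      have hs₀self : dist s₀ s₀ < δ := by simpa using hδ
      have := chainR_congr (a := v) hconst (fun j _ => hW j)
        (g := fun j => H (s, q j)) (g' := fun j => H (s₀, q j))
        (by show H (s, q 0) = H (s₀, q 0); rw [hq0, ha s, ha s₀]) (hgmem s hs) (hgmem s₀ hs₀self)
      exact this (n-1) (by omega)
    have hball : ∀ᶠ s in 𝓝 s₀, dist s s₀ < δ :=
      Metric.ball_mem_nhds s₀ hδ
    filter_upwards [hball] with s hs
    have h1 := hkey s hs
    have h2 := hkey s₀ (by simpa using hδ)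
    rw [h1, h2]
  -- locally constant implies globally constant
  have hconstφ : φ 1 = φ 0 := by
    set A : Set I := {s | φ s = φ 0} with hA
    have hopenA : IsOpen A := by
      rw [isOpen_iff_mem_nhds]
      intro t ht
      filter_upwards [hloc t] with s hs
      simpa [hA] using hs.trans ht
    have hclosedA : IsClosed A := by
      rw [← isOpen_compl_iff, isOpen_iff_mem_nhds]
      intro t ht
      filter_upwards [hloc t] with s hs hmem
      exact ht (by simpa [hA] using hs.symm.trans hmem)
    have huniv : A = univ := (isClopen_iff.mp ⟨hclosedA, hopenA⟩).resolve_left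
      (Nonempty.ne_empty ⟨0, by simp [hA]⟩)
    have : (1 : I) ∈ A := huniv ▸ mem_univ (1 : I)
    exact this
  rw [hφ 0 ℓ₀ h₀ h₀0, hφ 1 ℓ₁ h₁ h₁0, hconstφ]

/-- Gluing lifts along a concatenation of paths. -/
lemma isLift_trans {x y z : Ω} {γ₁ : Path x y} {γ₂ : Path y z} {ℓ₁ ℓ₂ : I → ℝ}
    (h₁ : IsLift 𝒰 f (⇑γ₁) ℓ₁) (h₂ : IsLift 𝒰 f (⇑γ₂) ℓ₂) (hmatch : ℓ₂ 0 = ℓ₁ 1) :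
    ∃ ℓ : I → ℝ, IsLift 𝒰 f (⇑(γ₁.trans γ₂)) ℓ ∧ ℓ 0 = ℓ₁ 0 ∧ ℓ 1 = ℓ₂ 1 := by
  classical
  set m₁ : I → I := fun s => projIcc 0 1 zero_le_one (2 * (s : ℝ)) with hm₁
  set m₂ : I → I := fun s => projIcc 0 1 zero_le_one (2 * (s : ℝ) - 1) with hm₂
  have hm₁c : Continuous m₁ :=
    continuous_projIcc.comp ((continuous_const.mul continuous_subtype_val))
  have hm₂c : Continuous m₂ :=
    continuous_projIcc.comp ((continuous_const.mul continuous_subtype_val).sub continuous_const)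
  set ℓ : I → ℝ := fun s => if (s : ℝ) ≤ 1/2 then ℓ₁ (m₁ s) else ℓ₂ (m₂ s) with hℓ
  have hm₁val : ∀ s : I, (s : ℝ) ≤ 1/2 → ((m₁ s : ℝ)) = 2 * (s : ℝ) := by
    intro s hs
    have hmem : 2 * (s : ℝ) ∈ Icc (0:ℝ) 1 := ⟨by nlinarith [s.2.1], by nlinarith⟩
    simp only [hm₁]
    rw [projIcc_of_mem zero_le_one hmem]
  have hm₂val : ∀ s : I, 1/2 ≤ (s : ℝ) → ((m₂ s : ℝ)) = 2 * (s : ℝ) - 1 := by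
    intro s hs
    have hmem : 2 * (s : ℝ) - 1 ∈ Icc (0:ℝ) 1 := ⟨by nlinarith, by nlinarith [s.2.2]⟩
    simp only [hm₂]
    rw [projIcc_of_mem zero_le_one hmem]
  have htrans₁ : ∀ s : I, (s : ℝ) ≤ 1/2 → (γ₁.trans γ₂) s = γ₁ (m₁ s) := by
    intro s hs
    rw [Path.trans_apply, dif_pos hs]
    congr 1
    exact Subtype.ext (hm₁val s hs).symm
  have htrans₂ : ∀ s : I, 1/2 < (s : ℝ) → (γ₁.trans γ₂) s = γ₂ (m₂ s) := by
    intro s hs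
    rw [Path.trans_apply, dif_neg (not_le.mpr hs)]
    congr 1
    exact Subtype.ext (hm₂val s hs.le).symm
  have hm₁0 : m₁ 0 = 0 := Subtype.ext (by rw [hm₁val 0 (by norm_num)]; norm_num)
  have hm₂1 : m₂ 1 = 1 := Subtype.ext (by rw [hm₂val 1 (by norm_num)]; norm_num)
  have hℓ0 : ℓ 0 = ℓ₁ 0 := by
    simp only [hℓ, Icc.coe_zero]
    rw [if_pos (by norm_num), hm₁0]
  have hℓ1 : ℓ 1 = ℓ₂ 1 := by
    simp only [hℓ, Icc.coe_one]
    rw [if_neg (by norm_num), hm₂1]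
  refine ⟨ℓ, ?_, hℓ0, hℓ1⟩
  intro t
  rcases lt_trichotomy ((t : ℝ)) (1/2) with ht | ht | ht
  · -- left piece
    obtain ⟨U, hU, hev⟩ := h₁ (m₁ t)
    refine ⟨U, hU, ?_⟩
    have hev1 : ∀ᶠ s : I in 𝓝 t, (s : ℝ) < 1/2 :=
      (isOpen_Iio.preimage continuous_subtype_val).mem_nhds ht
    have hev2 : ∀ᶠ s : I in 𝓝 t, γ₁ (m₁ s) ∈ U ∧
        ℓ₁ (m₁ s) = f U (γ₁ (m₁ s)) + (ℓ₁ (m₁ t) - f U (γ₁ (m₁ t))) :=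
      (hm₁c.tendsto t).eventually hev
    filter_upwards [hev1, hev2] with s hs ⟨hsU, hsE⟩
    rw [htrans₁ s hs.le]
    refine ⟨hsU, ?_⟩
    have h₁' : ℓ s = ℓ₁ (m₁ s) := by simp only [hℓ]; rw [if_pos hs.le]
    have h₂' : ℓ t = ℓ₁ (m₁ t) := by simp only [hℓ]; rw [if_pos ht.le]
    rw [h₁', h₂', htrans₁ t ht.le, hsE]
  · -- the seam
    obtain ⟨U₁, hU₁, hev₁⟩ := h₁ 1
    obtain ⟨U₂, hU₂, hev₂⟩ := h₂ 0
    have hy₁ : γ₁ 1 = y := γ₁.target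
    have hy₂ : γ₂ 0 = y := γ₂.source
    have hyU₁ : y ∈ U₁ := by have := hev₁.self_of_nhds.1; rwa [hy₁] at this
    have hyU₂ : y ∈ U₂ := by have := hev₂.self_of_nhds.1; rwa [hy₂] at this
    have hm₁t : m₁ t = 1 := Subtype.ext (by rw [hm₁val t ht.le, ht]; norm_num)
    have hm₂t : m₂ t = 0 := Subtype.ext (by rw [hm₂val t ht.ge, ht]; norm_num)
    have htranst : (γ₁.trans γ₂) t = y := by rw [htrans₁ t ht.le, hm₁t, hy₁]
    have hℓt : ℓ t = ℓ₁ 1 := by simp only [hℓ]; rw [if_pos ht.le, hm₁t]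
    -- the transition identity
    have hswitch : ∀ w ∈ U₁ ∩ U₂,
        f U₂ w + (ℓ₂ 0 - f U₂ y) = f U₁ w + (ℓ₁ 1 - f U₁ y) := by
      intro w hw
      have := diff_eq hconst hU₁ hU₂ hw ⟨hyU₁, hyU₂⟩
      rw [hmatch]; linarith
    refine ⟨U₁, hU₁, ?_⟩
    have hevA : ∀ᶠ s : I in 𝓝 t, γ₁ (m₁ s) ∈ U₁ ∧
        ℓ₁ (m₁ s) = f U₁ (γ₁ (m₁ s)) + (ℓ₁ 1 - f U₁ (γ₁ 1)) := by
      have h2 : Tendsto m₁ (𝓝 t) (𝓝 (1 : I)) := hm₁t ▸ hm₁c.tendsto t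
      exact h2.eventually hev₁
    have hevB : ∀ᶠ s : I in 𝓝 t, γ₂ (m₂ s) ∈ U₂ ∧
        ℓ₂ (m₂ s) = f U₂ (γ₂ (m₂ s)) + (ℓ₂ 0 - f U₂ (γ₂ 0)) := by
      have h2 : Tendsto m₂ (𝓝 t) (𝓝 (0 : I)) := hm₂t ▸ hm₂c.tendsto t
      exact h2.eventually hev₂
    have hevC : ∀ᶠ s : I in 𝓝 t, γ₂ (m₂ s) ∈ U₁ := by
      have hcont : Continuous fun s : I => γ₂ (m₂ s) := γ₂.continuous.comp hm₂c
      have : (fun s : I => γ₂ (m₂ s)) t ∈ U₁ := by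
        show γ₂ (m₂ t) ∈ U₁
        rw [hm₂t, hy₂]; exact hyU₁
      exact hcont.continuousAt.preimage_mem_nhds ((hopen _ hU₁).mem_nhds this)
    filter_upwards [hevA, hevB, hevC] with s hA hB hC
    rcases le_or_gt ((s : ℝ)) (1/2) with hs | hs
    · rw [htrans₁ s hs]
      refine ⟨hA.1, ?_⟩
      have h₁' : ℓ s = ℓ₁ (m₁ s) := by simp only [hℓ]; rw [if_pos hs]
      rw [h₁', hℓt, htranst, hA.2, hy₁]
    · rw [htrans₂ s hs]
      refine ⟨hC, ?_⟩
      have h₁' : ℓ s = ℓ₂ (m₂ s) := by simp only [hℓ]; rw [if_neg (not_le.mpr hs)]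
      have := hswitch (γ₂ (m₂ s)) ⟨hC, hB.1⟩
      rw [h₁', hℓt, htranst, hB.2, hy₂]
      linarith
  · -- right piece
    obtain ⟨U, hU, hev⟩ := h₂ (m₂ t)
    refine ⟨U, hU, ?_⟩
    have hev1 : ∀ᶠ s : I in 𝓝 t, 1/2 < (s : ℝ) :=
      (isOpen_Ioi.preimage continuous_subtype_val).mem_nhds ht
    have hev2 : ∀ᶠ s : I in 𝓝 t, γ₂ (m₂ s) ∈ U ∧
        ℓ₂ (m₂ s) = f U (γ₂ (m₂ s)) + (ℓ₂ (m₂ t) - f U (γ₂ (m₂ t))) :=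
      (hm₂c.tendsto t).eventually hev
    filter_upwards [hev1, hev2] with s hs ⟨hsU, hsE⟩
    rw [htrans₂ s hs]
    refine ⟨hsU, ?_⟩
    have h₁' : ℓ s = ℓ₂ (m₂ s) := by simp only [hℓ]; rw [if_neg (not_le.mpr hs)]
    have h₂' : ℓ t = ℓ₂ (m₂ t) := by simp only [hℓ]; rw [if_neg (not_le.mpr ht)]
    rw [h₁', h₂', htrans₂ t ht, hsE]

end Main

end Stmt1Aux

theorem stmt_1 {Ω : Type*} [TopologicalSpace Ω] [SimplyConnectedSpace Ω]
    (𝒰 : Set (Set Ω)) (hopen : ∀ U ∈ 𝒰, IsOpen U) (hpc : ∀ U ∈ 𝒰, IsPathConnected U)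
    (hcover : ⋃₀ 𝒰 = Set.univ)
    (f : Set Ω → Ω → ℝ)
    (hconst : ∀ U ∈ 𝒰, ∀ V ∈ 𝒰, (U ∩ V).Nonempty →
      ∃ c : ℝ, ∀ x ∈ U ∩ V, f V x - f U x = c) :
    ∃ g : Ω → ℝ, ∀ U ∈ 𝒰, ∃ c : ℝ, ∀ x ∈ U, f U x - g x = c := by
  classical
  haveI hpcs : PathConnectedSpace Ω := inferInstance
  obtain ⟨x₀⟩ : Nonempty Ω := hpcs.nonempty
  set p : ∀ x : Ω, Path x₀ x := fun x => (hpcs.joined x₀ x).somePath with hp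
  have hex : ∀ x : Ω, ∃ ℓ : I → ℝ, Stmt1Aux.IsLift 𝒰 f (⇑(p x)) ℓ ∧ ℓ 0 = 0 :=
    fun x => Stmt1Aux.exists_lift hopen hcover hconst _ (p x).continuous 0
  set L : Ω → I → ℝ := fun x => Classical.choose (hex x) with hL
  have hLspec : ∀ x : Ω, Stmt1Aux.IsLift 𝒰 f (⇑(p x)) (L x) ∧ L x 0 = 0 :=
    fun x => Classical.choose_spec (hex x)
  set g : Ω → ℝ := fun x => L x 1 with hg
  -- any lift of any path from x₀ to x computes g x
  have g_spec : ∀ (x : Ω) (q : Path x₀ x) (ℓ : I → ℝ),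
      Stmt1Aux.IsLift 𝒰 f (⇑q) ℓ → ℓ 0 = 0 → ℓ 1 = g x := by
    intro x q ℓ hl h0
    obtain ⟨F⟩ := SimplyConnectedSpace.paths_homotopic (p x) q
    have ha : ∀ s : I, (F.toHomotopy.toContinuousMap) (s, 0) = x₀ := fun s => F.source s
    have hb : ∀ s : I, (F.toHomotopy.toContinuousMap) (s, 1) = x := fun s => F.target s
    have h₀fun : (fun t => (F.toHomotopy.toContinuousMap) ((0 : I), t)) = ⇑(p x) :=
      funext fun t => by simpa using F.toHomotopy.apply_zero t
    have h₁fun : (fun t => (F.toHomotopy.toContinuousMap) ((1 : I), t)) = ⇑q :=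
      funext fun t => by simpa using F.toHomotopy.apply_one t
    have := Stmt1Aux.monodromy hopen hcover hconst F.toHomotopy.toContinuousMap ha hb 0
      (ℓ₀ := L x) (ℓ₁ := ℓ) (by rw [h₀fun]; exact (hLspec x).1)
      (by rw [h₁fun]; exact hl) (hLspec x).2 h0
    exact this.symm
  refine ⟨g, ?_⟩
  intro U hU
  obtain ⟨x₁, hx₁, hjoin⟩ := hpc U hU
  refine ⟨f U x₁ - g x₁, ?_⟩
  intro y hy
  set η : Path x₁ y := (hjoin hy).somePath with hη
  have hηmem : ∀ t : I, η t ∈ U := (hjoin hy).somePath_mem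
  set ℓ₂ : I → ℝ := fun t => f U (η t) + (g x₁ - f U x₁) with hℓ₂
  have hl₂ : Stmt1Aux.IsLift 𝒰 f (⇑η) ℓ₂ := by
    intro t
    refine ⟨U, hU, Eventually.of_forall fun s => ⟨hηmem s, ?_⟩⟩
    simp only [hℓ₂]
    ring
  have hmatch : ℓ₂ 0 = L x₁ 1 := by
    simp only [hℓ₂]
    rw [η.source]
    simp only [hg]
    ring
  obtain ⟨ℓ, hl, h0, h1⟩ := Stmt1Aux.isLift_trans hopen hcover hconst (hLspec x₁).1 hl₂ hmatch
  have hgy : ℓ 1 = g y := g_spec y ((p x₁).trans η) ℓ hl (h0.trans (hLspec x₁).2)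
  have hℓ₂1 : ℓ₂ 1 = f U y + (g x₁ - f U x₁) := by
    simp only [hℓ₂]
    rw [η.target]
  rw [← hgy, h1, hℓ₂1]
  ring
end

section
/- Let Ω be a topological space, 𝒰 an open covering, d a coupling satisfying the cocycle conditions, and Γ : [0,1]² → Ω a continuous homotopy with fixed endpoints Γ(0,·) = x₀ and Γ(1,·) = x. For each s ∈ [0,1] define C(s) as the sum Σ_{k=0}^{n} d_{U_k U_{k+1}} over any admissible subdivision-and-cover of the path Γ(·,s) (with fixed initial set U_0 ∋ x₀ and final set U_{n+1} = U ∋ x), which is well-defined independent of the choices. Then s ↦ C(s) is locally constant, hence constant on [0,1]; in particular the value associated with Γ(·,0) equals that associated with Γ(·,1). -/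
open Metric Set

theorem stmt_8 {Ω : Type*} [TopologicalSpace Ω]
    (𝒰 : Set (Set Ω)) (hopen : ∀ U ∈ 𝒰, IsOpen U) (hcover : ⋃₀ 𝒰 = Set.univ)
    (d : Set Ω → Set Ω → ℝ)
    (hanti : ∀ U ∈ 𝒰, ∀ V ∈ 𝒰, (U ∩ V).Nonempty → d U V = - d V U)
    (hcoc : ∀ U ∈ 𝒰, ∀ V ∈ 𝒰, ∀ W ∈ 𝒰, (U ∩ V ∩ W).Nonempty → d U W = d U V + d V W)
    (x₀ x : Ω) (Γ : unitInterval × unitInterval → Ω) (hΓ : Continuous Γ)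
    (hΓ0 : ∀ s : unitInterval, Γ (0, s) = x₀)
    (hΓ1 : ∀ s : unitInterval, Γ (1, s) = x)
    (U₀ U : Set Ω) (hU₀ : U₀ ∈ 𝒰) (hU : U ∈ 𝒰) (hx₀ : x₀ ∈ U₀) (hx : x ∈ U)
    (C : unitInterval → ℝ)
    -- C s equals the sum over any admissible subdivision-and-cover of Γ(·,s),
    -- with fixed initial set U₀ and final set U:
    (hCdef : ∀ s : unitInterval, ∀ n : ℕ, 0 < n →
      ∀ t : ℕ → unitInterval, ∀ V : ℕ → Set Ω,
      t 0 = 0 → t n = 1 → (∀ k < n, t k < t (k + 1)) →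
      V 0 = U₀ → V (n + 1) = U → (∀ k, 1 ≤ k → k ≤ n → V k ∈ 𝒰) →
      (∀ k, 1 ≤ k → k ≤ n →
        ∀ r : unitInterval, t (k - 1) ≤ r → r ≤ t k → Γ (r, s) ∈ V k) →
      C s = ∑ k ∈ Finset.range (n + 1), d (V k) (V (k + 1))) :
    ∀ s s' : unitInterval, C s = C s' := by
  -- It suffices to show C is locally constant.
  suffices hlc : IsLocallyConstant C by
    intro s s'
    exact hlc.apply_eq_of_preconnectedSpace s s'
  rw [IsLocallyConstant.iff_exists_open]
  intro s
  -- For each r, pick a covering set W r ∋ Γ(r,s) and a product open neighborhood.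
  have hchoice : ∀ r : unitInterval, ∃ W ∈ 𝒰, ∃ A B : Set unitInterval,
      IsOpen A ∧ IsOpen B ∧ r ∈ A ∧ s ∈ B ∧ A ×ˢ B ⊆ Γ ⁻¹' W := by
    intro r
    have hmem : Γ (r, s) ∈ ⋃₀ 𝒰 := by rw [hcover]; trivial
    obtain ⟨W, hW𝒰, hmemW⟩ := hmem
    have hpre : IsOpen (Γ ⁻¹' W) := (hopen W hW𝒰).preimage hΓ
    obtain ⟨A, B, hA, hB, hrA, hsB, hsub⟩ := isOpen_prod_iff.mp hpre r s hmemW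
    exact ⟨W, hW𝒰, A, B, hA, hB, hrA, hsB, hsub⟩
  choose W hW𝒰 A B hAopen hBopen hrA hsB hsub using hchoice
  -- Finite subcover of [0,1] by the A r's.
  obtain ⟨F, hF⟩ := isCompact_univ.elim_finite_subcover A hAopen
    (fun r _ => Set.mem_iUnion.mpr ⟨r, hrA r⟩)
  -- Lebesgue number for the cover {A i : i ∈ F}.
  have hcov : (Set.univ : Set unitInterval) ⊆ ⋃ i : F, A i := by
    intro r hr
    obtain ⟨i, hiF, hri⟩ := Set.mem_iUnion₂.mp (hF hr)
    exact Set.mem_iUnion.mpr ⟨⟨i, hiF⟩, hri⟩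
  obtain ⟨δ, hδpos, hLeb⟩ := lebesgue_number_lemma_of_metric isCompact_univ
    (fun i : F => hAopen i) hcov
  -- Choose n with 1/n < δ.
  obtain ⟨n, hn⟩ := exists_nat_one_div_lt hδpos
  set m : ℕ := n + 1 with hm
  have hmpos : 0 < m := Nat.succ_pos n
  have hmR : (0 : ℝ) < m := by exact_mod_cast hmpos
  have hinv : (1 : ℝ) / m < δ := by push_cast [hm]; exact hn
  -- The subdivision t k = min k m / m.
  have htmem : ∀ k : ℕ, ((min k m : ℕ) : ℝ) / m ∈ unitInterval := by
    intro k
    constructor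
    · positivity
    · rw [div_le_one hmR]
      exact_mod_cast Nat.min_le_right k m
  set t : ℕ → unitInterval := fun k => ⟨((min k m : ℕ) : ℝ) / m, htmem k⟩ with ht
  have ht0 : t 0 = 0 := by
    simp [ht]
  have htm : t m = 1 := by
    simp only [ht, min_self]
    exact Subtype.ext (by field_simp; simp)
  have htval : ∀ k ≤ m, (t k : ℝ) = (k : ℝ) / m := by
    intro k hk
    simp [ht, Nat.min_eq_left hk, hk]
  have htmono : ∀ k < m, t k < t (k + 1) := by
    intro k hk
    rw [← Subtype.coe_lt_coe, htval k (le_of_lt hk), htval (k + 1) hk]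
    gcongr
    exact_mod_cast Nat.lt_succ_self k
  -- For each k, choose the covering index for the ball around t (k-1).
  have hball : ∀ k : ℕ, ∃ i : F, ball (t (k - 1)) δ ⊆ A i :=
    fun k => hLeb (t (k - 1)) trivial
  choose ρ hρ using hball
  -- The covering sets.
  set V : ℕ → Set Ω := fun k => if k = 0 then U₀ else if k ≤ m then W (ρ k) else U with hV
  have hV0 : V 0 = U₀ := by simp [hV]
  have hVm : V (m + 1) = U := by simp [hV]
  have hVmem : ∀ k, 1 ≤ k → k ≤ m → V k ∈ 𝒰 := by
    intro k hk1 hkm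
    simp only [hV, if_neg (by omega : ¬ k = 0), if_pos hkm]
    exact hW𝒰 (ρ k)
  -- The common neighborhood of s.
  refine ⟨⋂ i ∈ F, B i, isOpen_biInter_finset (fun i _ => hBopen i), ?_, ?_⟩
  · exact Set.mem_biInter (fun i _ => hsB i)
  · -- On this neighborhood the value of C is given by the same sum.
    have key : ∀ s' : unitInterval, s' ∈ ⋂ i ∈ F, B i →
        C s' = ∑ k ∈ Finset.range (m + 1), d (V k) (V (k + 1)) := by
      intro s' hs'
      apply hCdef s' m hmpos t V ht0 htm htmono hV0 hVm hVmem
      intro k hk1 hkm r hrl hru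
      -- r lies in ball (t (k-1)) δ.
      have hrball : r ∈ ball (t (k - 1)) δ := by
        rw [mem_ball, Subtype.dist_eq, Real.dist_eq, abs_of_nonneg (by
          exact sub_nonneg.mpr hrl)]
        have h1 : (r : ℝ) ≤ (t k : ℝ) := hru
        have h2 : (t k : ℝ) - (t (k - 1) : ℝ) = 1 / m := by
          rw [htval k hkm, htval (k - 1) (le_trans (Nat.sub_le k 1) hkm)]
          have : ((k - 1 : ℕ) : ℝ) = (k : ℝ) - 1 := by
            have : 1 ≤ k := hk1
            push_cast [this]; ring
          rw [this]; ring
        calc (r : ℝ) - (t (k - 1) : ℝ) ≤ (t k : ℝ) - (t (k - 1) : ℝ) := by linarith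
          _ = 1 / m := h2
          _ < δ := hinv
      have hrA' : r ∈ A (ρ k) := hρ k hrball
      have hs'B : s' ∈ B (ρ k) := by
        exact Set.mem_iInter₂.mp hs' (ρ k) (ρ k).2
      have : (r, s') ∈ A (ρ k) ×ˢ B (ρ k) := ⟨hrA', hs'B⟩
      have hmemW : Γ (r, s') ∈ W (ρ k) := hsub (ρ k) this
      simpa only [hV, if_neg (by omega : ¬ k = 0), if_pos hkm] using hmemW
    intro s' hs'
    rw [key s' hs', key s (Set.mem_biInter (fun i _ => hsB i))]
end
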